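/- arXiv:2309.13880 — 4 statements merged into one kernel-verified Lean document; each statement's English description precedes it below -/
import Mathlib

section
/- Lemma 2.1.1: Let f : ℝ² → [0,∞) be a density satisfying f(z₁, z₂) = f(-z₂, -z₁) for all (z₁, z₂), and let W : ℝ → [0,∞) be even and strictly convex. Fix t ∈ ℝ and λ ≥ 0, and define r_λ(c, t) = ∫ W(s - c) f(s, s + t - λ) ds. Then for every c ∈ ℝ, r_λ(c, t) ≥ r_λ((λ - t)/2, t). -/
open MeasureTheory Set

/-- Lemma 2.1.1: for a bivariate density `f` with
`f z₁ z₂ = f (-z₂) (-z₁)` and an even strictly convex loss `W`, the function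
`c ↦ r_λ(c,t) = ∫ W (s - c) * f s (s + t - λ)` is minimized at `c = (λ - t)/2`. -/
theorem lemma_2_1_1 (f : ℝ → ℝ → ℝ) (W : ℝ → ℝ)
    (hfnonneg : ∀ z₁ z₂ : ℝ, 0 ≤ f z₁ z₂)
    (hfsym : ∀ z₁ z₂ : ℝ, f z₁ z₂ = f (-z₂) (-z₁))
    (hWnonneg : ∀ x : ℝ, 0 ≤ W x)
    (hW0 : W 0 = 0)
    (hWeven : ∀ x : ℝ, W x = W (-x))
    (hWconv : StrictConvexOn ℝ Set.univ W)
    (t lam : ℝ) (hlam : 0 ≤ lam)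
    (hint : ∀ c : ℝ, Integrable (fun s : ℝ => W (s - c) * f s (s + t - lam))) :
    ∀ c : ℝ,
      (∫ s : ℝ, W (s - (lam - t) / 2) * f s (s + t - lam)) ≤
        ∫ s : ℝ, W (s - c) * f s (s + t - lam) := by
  intro c
  -- the midpoint
  have hg : ∀ s : ℝ, f (lam - t - s) (lam - t - s + t - lam) = f s (s + t - lam) := by
    intro s
    rw [hfsym s (s + t - lam)]
    congr 1 <;> ring
  -- reflected integrand is integrable
  have hint' : Integrable (fun s : ℝ => W (lam - t - s - c) * f s (s + t - lam)) := by
    have h := (hint c).comp_sub_left (lam - t)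
    have : (fun s : ℝ => W (lam - t - s - c) * f (lam - t - s) (lam - t - s + t - lam)) =
        fun s : ℝ => W (lam - t - s - c) * f s (s + t - lam) := by
      funext s; rw [hg s]
    rwa [this] at h
  -- reflected integral equals original integral
  have hrefl : (∫ s : ℝ, W (lam - t - s - c) * f s (s + t - lam)) =
      ∫ s : ℝ, W (s - c) * f s (s + t - lam) := by
    have h := integral_sub_left_eq_self (fun s : ℝ => W (s - c) * f s (s + t - lam))
      (volume : Measure ℝ) (lam - t)
    calc (∫ s : ℝ, W (lam - t - s - c) * f s (s + t - lam))
        = ∫ s : ℝ, W (lam - t - s - c) * f (lam - t - s) (lam - t - s + t - lam) := by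
          congr 1; funext s; rw [hg s]
      _ = ∫ s : ℝ, W (s - c) * f s (s + t - lam) := h
  -- pointwise convexity bound
  have hpt : ∀ s : ℝ, 2 * (W (s - (lam - t) / 2) * f s (s + t - lam)) ≤
      W (s - c) * f s (s + t - lam) + W (lam - t - s - c) * f s (s + t - lam) := by
    intro s
    have hWin : 2 * W (s - (lam - t) / 2) ≤ W (s - c) + W (lam - t - s - c) := by
      have h := hWconv.convexOn.2 (mem_univ (s - c)) (mem_univ (-(lam - t - s - c)))
        (by norm_num : (0:ℝ) ≤ 1/2) (by norm_num : (0:ℝ) ≤ 1/2) (by norm_num)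
      rw [← hWeven (lam - t - s - c)] at h
      have he : (1/2 : ℝ) • (s - c) + (1/2 : ℝ) • (-(lam - t - s - c)) = s - (lam - t) / 2 := by
        simp only [smul_eq_mul]; ring
      rw [he] at h
      simp only [smul_eq_mul] at h
      linarith
    have hgpos : 0 ≤ f s (s + t - lam) := hfnonneg s (s + t - lam)
    nlinarith [hWin, hgpos]
  -- integrate the pointwise bound
  have hmain : (∫ s : ℝ, 2 * (W (s - (lam - t) / 2) * f s (s + t - lam))) ≤
      ∫ s : ℝ, (W (s - c) * f s (s + t - lam) + W (lam - t - s - c) * f s (s + t - lam)) := by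
    exact integral_mono ((hint ((lam - t) / 2)).const_mul 2) ((hint c).add hint') hpt
  rw [integral_const_mul] at hmain
  rw [integral_add (hint c) hint', hrefl] at hmain
  linarith
end

section
/- Monotone likelihood ratio preservation (Lemma 2.2.2, part 1): Let f : ℝ² → (0,∞) and suppose that for every Δ ≥ 0 and t ∈ ℝ, the ratio s ↦ f(s, s+t-Δ)/f(s, s+t) is nondecreasing in s. Then for every Δ ≥ 0 and t ∈ ℝ, the ratio s ↦ (∫_{-∞}^{t-Δ} f(s, s+y) dy) / (∫_{-∞}^{t} f(s, s+y) dy) is nondecreasing in s. -/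
open MeasureTheory Set

/-- Lemma 2.2.2, part 1: the monotone likelihood ratio property
is preserved by tail integration. -/
theorem mlr_preserved_tail (f : ℝ → ℝ → ℝ)
    (hfpos : ∀ z₁ z₂ : ℝ, 0 < f z₁ z₂)
    (hfmeas : Measurable (Function.uncurry f))
    (htail_int : ∀ s t : ℝ, IntegrableOn (fun y : ℝ => f s (s + y)) (Set.Iic t))
    (htail_pos : ∀ s t : ℝ, 0 < ∫ y in Set.Iic t, f s (s + y))
    (hmlr : ∀ Δ : ℝ, 0 ≤ Δ → ∀ t : ℝ,
      Monotone fun s : ℝ => f s (s + t - Δ) / f s (s + t)) :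
    ∀ Δ : ℝ, 0 ≤ Δ → ∀ t : ℝ,
      Monotone fun s : ℝ =>
        (∫ y in Set.Iic (t - Δ), f s (s + y)) / ∫ y in Set.Iic t, f s (s + y) := by
  intro Δ hΔ t s₁ s₂ h12
  simp only
  -- Cross-product inequality from the MLR hypothesis
  have key : ∀ a b : ℝ, a ≤ b →
      f s₁ (s₁ + a) * f s₂ (s₂ + b) ≤ f s₂ (s₂ + a) * f s₁ (s₁ + b) := by
    intro a b hab
    have h := hmlr (b - a) (by linarith) b h12
    simp only at h
    rw [div_le_div_iff₀ (hfpos _ _) (hfpos _ _)] at h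
    have e1 : s₁ + b - (b - a) = s₁ + a := by ring
    have e2 : s₂ + b - (b - a) = s₂ + a := by ring
    rw [e1, e2] at h
    linarith
  set A₁ := ∫ y in Set.Iic (t - Δ), f s₁ (s₁ + y) with hA₁
  set A₂ := ∫ y in Set.Iic (t - Δ), f s₂ (s₂ + y) with hA₂
  set C₁ := ∫ y in Set.Ioc (t - Δ) t, f s₁ (s₁ + y) with hC₁
  set C₂ := ∫ y in Set.Ioc (t - Δ) t, f s₂ (s₂ + y) with hC₂
  have hIocInt : ∀ s : ℝ, IntegrableOn (fun y : ℝ => f s (s + y)) (Set.Ioc (t - Δ) t) :=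
    fun s => (htail_int s t).mono_set Set.Ioc_subset_Iic_self
  -- decomposition of the full tail integral
  have hB : ∀ s : ℝ, (∫ y in Set.Iic t, f s (s + y)) =
      (∫ y in Set.Iic (t - Δ), f s (s + y)) + ∫ y in Set.Ioc (t - Δ) t, f s (s + y) := by
    intro s
    rw [← Set.Iic_union_Ioc_eq_Iic (by linarith : t - Δ ≤ t),
      setIntegral_union (Set.Iic_disjoint_Ioc le_rfl) measurableSet_Ioc
        (htail_int s (t - Δ)) (hIocInt s)]
  -- inner comparison: for a ≤ t - Δ
  have hC : ∀ a : ℝ, a ∈ Set.Iic (t - Δ) →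
      f s₁ (s₁ + a) * C₂ ≤ f s₂ (s₂ + a) * C₁ := by
    intro a ha
    rw [hC₁, hC₂, ← integral_const_mul, ← integral_const_mul]
    apply setIntegral_mono_on ((hIocInt s₂).const_mul _) ((hIocInt s₁).const_mul _)
      measurableSet_Ioc
    intro b hb
    exact key a b (le_trans ha (le_of_lt hb.1))
  have hAC : A₁ * C₂ ≤ A₂ * C₁ := by
    rw [hA₁, hA₂, ← integral_mul_const, ← integral_mul_const]
    exact setIntegral_mono_on ((htail_int s₁ (t - Δ)).mul_const _)
      ((htail_int s₂ (t - Δ)).mul_const _) measurableSet_Iic hC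
  have hB₁ : (0:ℝ) < ∫ y in Set.Iic t, f s₁ (s₁ + y) := htail_pos s₁ t
  have hB₂ : (0:ℝ) < ∫ y in Set.Iic t, f s₂ (s₂ + y) := htail_pos s₂ t
  have hA₁pos : 0 < A₁ := htail_pos s₁ (t - Δ)
  have hA₂pos : 0 < A₂ := htail_pos s₂ (t - Δ)
  rw [div_le_div_iff₀ hB₁ hB₂, hB s₁, hB s₂]
  nlinarith [hAC, hA₁pos, hA₂pos]
end

section
/- Lemma 2.2.2, part 2: Let f : ℝ² → (0,∞) and suppose that for every Δ ≥ 0 and t ∈ ℝ, the ratio s ↦ f(s, s+t-Δ)/f(s, s+t) is nondecreasing in s. Then for every t ∈ ℝ, the hazard-type ratio s ↦ f(s, s+t) / ∫_{-∞}^{t} f(s, s+y) dy is nonincreasing in s. -/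
open MeasureTheory Set

/-- Lemma 2.2.2, part 2: under the MLR assumption, the
hazard-type ratio `s ↦ f s (s+t) / ∫_{-∞}^{t} f s (s+y) dy` is nonincreasing. -/
theorem hazard_ratio_antitone (f : ℝ → ℝ → ℝ)
    (hfpos : ∀ z₁ z₂ : ℝ, 0 < f z₁ z₂)
    (hfmeas : Measurable (Function.uncurry f))
    (htail_int : ∀ s t : ℝ, IntegrableOn (fun y : ℝ => f s (s + y)) (Set.Iic t))
    (htail_pos : ∀ s t : ℝ, 0 < ∫ y in Set.Iic t, f s (s + y))
    (hmlr : ∀ Δ : ℝ, 0 ≤ Δ → ∀ t : ℝ,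
      Monotone fun s : ℝ => f s (s + t - Δ) / f s (s + t)) :
    ∀ t : ℝ,
      Antitone fun s : ℝ => f s (s + t) / ∫ y in Set.Iic t, f s (s + y) := by
  intro t s₁ s₂ hs
  simp only
  -- key: the reciprocal ratio is monotone
  have key : (∫ y in Set.Iic t, f s₁ (s₁ + y)) / f s₁ (s₁ + t)
      ≤ (∫ y in Set.Iic t, f s₂ (s₂ + y)) / f s₂ (s₂ + t) := by
    have h₁ : (∫ y in Set.Iic t, f s₁ (s₁ + y)) / f s₁ (s₁ + t)
        = ∫ y in Set.Iic t, f s₁ (s₁ + y) / f s₁ (s₁ + t) := by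
      rw [integral_div]
    have h₂ : (∫ y in Set.Iic t, f s₂ (s₂ + y)) / f s₂ (s₂ + t)
        = ∫ y in Set.Iic t, f s₂ (s₂ + y) / f s₂ (s₂ + t) := by
      rw [integral_div]
    rw [h₁, h₂]
    apply setIntegral_mono_on
    · exact (htail_int s₁ t).div_const _
    · exact (htail_int s₂ t).div_const _
    · exact measurableSet_Iic
    · intro y hy
      have hΔ : 0 ≤ t - y := by simpa using hy
      have := hmlr (t - y) hΔ t hs
      simp only at this
      have e1 : s₁ + t - (t - y) = s₁ + y := by ring
      have e2 : s₂ + t - (t - y) = s₂ + y := by ring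
      rwa [e1, e2] at this
  have F₁ := hfpos s₁ (s₁ + t)
  have F₂ := hfpos s₂ (s₂ + t)
  have I₁ := htail_pos s₁ t
  have I₂ := htail_pos s₂ t
  rw [div_le_div_iff₀ I₂ I₁]
  rw [div_le_div_iff₀ F₁ F₂] at key
  nlinarith
end

section
/- For the bivariate normal model with common variance σ² and correlation ρ, the Brewster–Zidek solution under squared error loss W(t) = t² is explicit: the unique solution c of ∫_{-∞}^{∞} ∫_{-∞}^{t} (s - c) f(s, s+y) dy ds = 0, where f is the centered BVN(0,0,σ²,σ²,ρ) density, is c = (τ/2)·φ(t/τ)/Φ(t/τ) with τ = σ√(2(1-ρ)), where φ and Φ are the standard normal pdf and cdf. -/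
open MeasureTheory Set

/-- The centered bivariate normal density with common variance `σ²` and
correlation `ρ`. -/
noncomputable def bvnDensity (σ ρ : ℝ) (z₁ z₂ : ℝ) : ℝ :=
  (2 * Real.pi * σ ^ 2 * Real.sqrt (1 - ρ ^ 2))⁻¹ *
    Real.exp (-(z₁ ^ 2 - 2 * ρ * z₁ * z₂ + z₂ ^ 2) / (2 * (1 - ρ ^ 2) * σ ^ 2))

/-- The standard normal pdf. -/
noncomputable def stdNormalPdf (x : ℝ) : ℝ :=
  Real.exp (-x ^ 2 / 2) / Real.sqrt (2 * Real.pi)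

/-- The standard normal cdf. -/
noncomputable def stdNormalCdf (x : ℝ) : ℝ :=
  ∫ y in Set.Iic x, stdNormalPdf y

section BZAux
open Real Filter Topology


lemma gauss_shift_integrable {b : ℝ} (hb : 0 < b) (a : ℝ) :
    Integrable (fun x : ℝ => Real.exp (-b * (x + a) ^ 2)) :=
  (integrable_exp_neg_mul_sq hb).comp_add_right a

lemma gauss_shift_integral {b : ℝ} (hb : 0 < b) (a : ℝ) :
    ∫ x : ℝ, Real.exp (-b * (x + a) ^ 2) = Real.sqrt (π / b) := by
  rw [MeasureTheory.integral_add_right_eq_self (μ := volume)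
    (fun u : ℝ => Real.exp (-b * u ^ 2)) a]
  exact integral_gaussian b

lemma gauss_odd (b : ℝ) : ∫ x : ℝ, x * Real.exp (-b * x ^ 2) = 0 := by
  have h := MeasureTheory.integral_neg_eq_self (fun x : ℝ => x * Real.exp (-b * x ^ 2)) volume
  simp only [neg_sq, neg_mul] at h
  rw [MeasureTheory.integral_neg] at h
  simp only [neg_mul]
  linarith

lemma gauss_shift_moment_integrable {b : ℝ} (hb : 0 < b) (a : ℝ) :
    Integrable (fun x : ℝ => x * Real.exp (-b * (x + a) ^ 2)) := by
  have h1 : Integrable (fun x : ℝ => (x + a) * Real.exp (-b * (x + a) ^ 2)) :=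
    (integrable_mul_exp_neg_mul_sq hb).comp_add_right a
  have h2 := (gauss_shift_integrable hb a).const_mul a
  have := h1.sub h2
  refine this.congr (Eventually.of_forall fun x => ?_)
  simp only [Pi.sub_apply]
  ring

lemma gauss_shift_moment {b : ℝ} (hb : 0 < b) (a : ℝ) :
    ∫ x : ℝ, x * Real.exp (-b * (x + a) ^ 2) = -a * Real.sqrt (π / b) := by
  have h := MeasureTheory.integral_add_right_eq_self (μ := volume)
    (fun x : ℝ => (x - a) * Real.exp (-b * x ^ 2)) a
  simp only [add_sub_cancel_right] at h
  rw [h]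
  have h3 : ∀ x : ℝ, (x - a) * Real.exp (-b * x ^ 2)
      = x * Real.exp (-b * x ^ 2) - a * Real.exp (-b * x ^ 2) := fun x => by ring
  simp_rw [h3]
  rw [integral_sub (integrable_mul_exp_neg_mul_sq hb)
    ((integrable_exp_neg_mul_sq hb).const_mul a), gauss_odd,
    MeasureTheory.integral_const_mul, integral_gaussian]
  ring

lemma gauss_Iic_moment {b : ℝ} (hb : 0 < b) (t : ℝ) :
    ∫ y in Iic t, y * Real.exp (-b * y ^ 2) = -Real.exp (-b * t ^ 2) / (2 * b) := by
  have hderiv : ∀ x : ℝ, x ∈ Iic t → HasDerivAt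
      (fun x : ℝ => -Real.exp (-b * x ^ 2) / (2 * b)) (x * Real.exp (-b * x ^ 2)) x := by
    intro x _
    have h := (((hasDerivAt_pow 2 x).const_mul (-b)).exp.neg).div_const (2 * b)
    refine h.congr_deriv ?_
    field_simp
    ring
  have h1 : Tendsto (fun x : ℝ => -b * x ^ 2) atBot atBot := by
    have := (tendsto_neg_const_mul_pow_atTop (c := -b) (n := 2) two_ne_zero
      (by linarith)).comp tendsto_abs_atBot_atTop
    refine this.congr fun x => ?_
    simp [sq_abs]
  have htend : Tendsto (fun x : ℝ => -Real.exp (-b * x ^ 2) / (2 * b)) atBot (𝓝 0) := by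
    have := ((tendsto_exp_atBot.comp h1).neg).div_const (2 * b)
    simpa using this
  have := integral_Iic_of_hasDerivAt_of_tendsto' hderiv
    (integrable_mul_exp_neg_mul_sq hb).integrableOn htend
  rw [this]; ring

lemma stdNormalPdf_integrable : Integrable stdNormalPdf := by
  have h := (integrable_exp_neg_mul_sq (by norm_num : (0:ℝ) < 1/2)).div_const
    (Real.sqrt (2 * π))
  refine h.congr (Eventually.of_forall fun x => ?_)
  unfold stdNormalPdf
  norm_num
  ring_nf

lemma stdNormalPdf_pos (x : ℝ) : 0 < stdNormalPdf x :=
  div_pos (Real.exp_pos _) (Real.sqrt_pos.2 (by positivity))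

lemma stdNormalCdf_pos (x : ℝ) : 0 < stdNormalCdf x := by
  rw [stdNormalCdf, setIntegral_pos_iff_support_of_nonneg_ae
    (Eventually.of_forall fun y => (stdNormalPdf_pos y).le)
    stdNormalPdf_integrable.integrableOn]
  have hs : Function.support stdNormalPdf = univ := by
    ext y; simp [Function.mem_support, (stdNormalPdf_pos y).ne']
  rw [hs, univ_inter, Real.volume_Iic]
  simp

lemma cdf_scale {τ : ℝ} (hτ : 0 < τ) (t : ℝ) :
    ∫ y in Iic t, stdNormalPdf (y / τ) = τ * stdNormalCdf (t / τ) := by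
  rw [stdNormalCdf, ← integral_indicator measurableSet_Iic,
    ← integral_indicator measurableSet_Iic]
  have h : ∀ y : ℝ, (Iic t).indicator (fun y => stdNormalPdf (y / τ)) y
      = (Iic (t / τ)).indicator stdNormalPdf (y / τ) := by
    intro y
    simp only [indicator_apply, mem_Iic, div_le_div_iff_of_pos_right hτ]
  simp_rw [h]
  rw [MeasureTheory.Measure.integral_comp_div (fun x => (Iic (t / τ)).indicator stdNormalPdf x) τ]
  rw [abs_of_pos hτ, smul_eq_mul]
lemma const_fact {b1 b2 K : ℝ} (hb1 : 0 < b1) (hb2 : 0 < b2) (hK : 0 < K)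
    (h : π / b1 * (π / b2) = K ^ 2) :
    (Real.sqrt (π / b1))⁻¹ * (Real.sqrt (π / b2))⁻¹ = K⁻¹ := by
  rw [← mul_inv, ← Real.sqrt_mul (by positivity), h, Real.sqrt_sq hK.le]

lemma bvn_fact1 {σ ρ : ℝ} (hσ : 0 < σ) (hρ1 : -1 < ρ) (hρ2 : ρ < 1) (s y : ℝ) :
    bvnDensity σ ρ s (s + y) =
      (Real.sqrt (π / ((1 + ρ) * σ ^ 2)⁻¹))⁻¹ *
          Real.exp (-((1 + ρ) * σ ^ 2)⁻¹ * (s + y / 2) ^ 2) *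
        ((Real.sqrt (π / (4 * (1 - ρ) * σ ^ 2)⁻¹))⁻¹ *
          Real.exp (-(4 * (1 - ρ) * σ ^ 2)⁻¹ * y ^ 2)) := by
  have h1 : (0:ℝ) < 1 + ρ := by linarith
  have h2 : (0:ℝ) < 1 - ρ := by linarith
  have h3 : (0:ℝ) < 1 - ρ ^ 2 := by nlinarith
  have hb1 : (0:ℝ) < ((1 + ρ) * σ ^ 2)⁻¹ := by positivity
  have hb2 : (0:ℝ) < (4 * (1 - ρ) * σ ^ 2)⁻¹ := by positivity
  have hK : (0:ℝ) < 2 * π * σ ^ 2 * Real.sqrt (1 - ρ ^ 2) := by positivity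
  have hC := const_fact hb1 hb2 hK (by
    simp only [div_inv_eq_mul]
    rw [show (2 * π * σ ^ 2 * Real.sqrt (1 - ρ ^ 2)) ^ 2
        = (2 * π * σ ^ 2) ^ 2 * Real.sqrt (1 - ρ ^ 2) ^ 2 by ring]
    rw [Real.sq_sqrt h3.le]
    ring)
  unfold bvnDensity
  rw [show (Real.sqrt (π / ((1 + ρ) * σ ^ 2)⁻¹))⁻¹ *
          Real.exp (-((1 + ρ) * σ ^ 2)⁻¹ * (s + y / 2) ^ 2) *
        ((Real.sqrt (π / (4 * (1 - ρ) * σ ^ 2)⁻¹))⁻¹ *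
          Real.exp (-(4 * (1 - ρ) * σ ^ 2)⁻¹ * y ^ 2))
      = ((Real.sqrt (π / ((1 + ρ) * σ ^ 2)⁻¹))⁻¹ * (Real.sqrt (π / (4 * (1 - ρ) * σ ^ 2)⁻¹))⁻¹) *
        (Real.exp (-((1 + ρ) * σ ^ 2)⁻¹ * (s + y / 2) ^ 2) *
          Real.exp (-(4 * (1 - ρ) * σ ^ 2)⁻¹ * y ^ 2)) by ring]
  rw [hC, ← Real.exp_add]
  congr 1
  congr 1
  have : (1:ℝ) + ρ ≠ 0 := h1.ne'
  have : (1:ℝ) - ρ ≠ 0 := h2.ne'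
  have : (1:ℝ) - ρ ^ 2 ≠ 0 := h3.ne'
  have : σ ≠ 0 := hσ.ne'
  field_simp
  ring

lemma bvn_fact2 {σ ρ : ℝ} (hσ : 0 < σ) (hρ1 : -1 < ρ) (hρ2 : ρ < 1) (s y : ℝ) :
    bvnDensity σ ρ s (s + y) =
      (Real.sqrt (π / (2 * σ ^ 2)⁻¹))⁻¹ * Real.exp (-(2 * σ ^ 2)⁻¹ * s ^ 2) *
        ((Real.sqrt (π / (2 * (1 - ρ ^ 2) * σ ^ 2)⁻¹))⁻¹ *
          Real.exp (-(2 * (1 - ρ ^ 2) * σ ^ 2)⁻¹ * (y + (1 - ρ) * s) ^ 2)) := by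
  have h1 : (0:ℝ) < 1 + ρ := by linarith
  have h2 : (0:ℝ) < 1 - ρ := by linarith
  have h3 : (0:ℝ) < 1 - ρ ^ 2 := by nlinarith
  have hb1 : (0:ℝ) < (2 * σ ^ 2)⁻¹ := by positivity
  have hb2 : (0:ℝ) < (2 * (1 - ρ ^ 2) * σ ^ 2)⁻¹ := by positivity
  have hK : (0:ℝ) < 2 * π * σ ^ 2 * Real.sqrt (1 - ρ ^ 2) := by positivity
  have hC := const_fact hb1 hb2 hK (by
    simp only [div_inv_eq_mul]
    rw [show (2 * π * σ ^ 2 * Real.sqrt (1 - ρ ^ 2)) ^ 2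
        = (2 * π * σ ^ 2) ^ 2 * Real.sqrt (1 - ρ ^ 2) ^ 2 by ring]
    rw [Real.sq_sqrt h3.le]
    ring)
  unfold bvnDensity
  rw [show (Real.sqrt (π / (2 * σ ^ 2)⁻¹))⁻¹ * Real.exp (-(2 * σ ^ 2)⁻¹ * s ^ 2) *
        ((Real.sqrt (π / (2 * (1 - ρ ^ 2) * σ ^ 2)⁻¹))⁻¹ *
          Real.exp (-(2 * (1 - ρ ^ 2) * σ ^ 2)⁻¹ * (y + (1 - ρ) * s) ^ 2))
      = ((Real.sqrt (π / (2 * σ ^ 2)⁻¹))⁻¹ * (Real.sqrt (π / (2 * (1 - ρ ^ 2) * σ ^ 2)⁻¹))⁻¹) *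
        (Real.exp (-(2 * σ ^ 2)⁻¹ * s ^ 2) *
          Real.exp (-(2 * (1 - ρ ^ 2) * σ ^ 2)⁻¹ * (y + (1 - ρ) * s) ^ 2)) by ring]
  rw [hC, ← Real.exp_add]
  congr 1
  field_simp
  ring

lemma bvn_nonneg (σ ρ z₁ z₂ : ℝ) : 0 ≤ bvnDensity σ ρ z₁ z₂ := by
  unfold bvnDensity
  positivity

lemma key (σ ρ t c : ℝ) (hσ : 0 < σ) (hρ1 : -1 < ρ) (hρ2 : ρ < 1) :
    ∫ s : ℝ, ∫ y in Iic t, (s - c) * bvnDensity σ ρ s (s + y)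
      = σ * Real.sqrt (2 * (1 - ρ)) / 2 * stdNormalPdf (t / (σ * Real.sqrt (2 * (1 - ρ))))
        - c * stdNormalCdf (t / (σ * Real.sqrt (2 * (1 - ρ)))) := by
  have h1 : (0:ℝ) < 1 + ρ := by linarith
  have h2 : (0:ℝ) < 1 - ρ := by linarith
  have h3 : (0:ℝ) < 1 - ρ ^ 2 := by nlinarith
  set τ : ℝ := σ * Real.sqrt (2 * (1 - ρ)) with hτdef
  have hτ : 0 < τ := by
    apply mul_pos hσ
    exact Real.sqrt_pos.2 (by linarith)
  have hτsq : τ ^ 2 = 2 * (1 - ρ) * σ ^ 2 := by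
    rw [hτdef, mul_pow, Real.sq_sqrt (by linarith : (0:ℝ) ≤ 2 * (1 - ρ))]
    ring
  set a1 : ℝ := (2 * σ ^ 2)⁻¹ with ha1def
  set a2 : ℝ := (2 * (1 - ρ ^ 2) * σ ^ 2)⁻¹ with ha2def
  set b1 : ℝ := ((1 + ρ) * σ ^ 2)⁻¹ with hb1def
  set b2 : ℝ := (4 * (1 - ρ) * σ ^ 2)⁻¹ with hb2def
  have ha1 : 0 < a1 := by rw [ha1def]; positivity
  have ha2 : 0 < a2 := by rw [ha2def]; positivity
  have hb1 : 0 < b1 := by rw [hb1def]; positivity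
  have hb2 : 0 < b2 := by rw [hb2def]; positivity
  have hb2τ : b2 = (2 * τ ^ 2)⁻¹ := by
    rw [hb2def, hτsq]; congr 1; ring
  -- measurability
  have hcont : Continuous (fun p : ℝ × ℝ => (p.1 - c) * bvnDensity σ ρ p.1 (p.1 + p.2)) := by
    unfold bvnDensity
    simp only [div_eq_mul_inv]
    fun_prop
  have hmeas : AEStronglyMeasurable (fun p : ℝ × ℝ => (p.1 - c) * bvnDensity σ ρ p.1 (p.1 + p.2))
      (volume.prod (volume.restrict (Iic t))) := hcont.aestronglyMeasurable
  -- slice integrability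
  have hslice : ∀ s : ℝ, Integrable (fun y => (s - c) * bvnDensity σ ρ s (s + y))
      (volume.restrict (Iic t)) := by
    intro s
    have h := (((gauss_shift_integrable ha2 ((1 - ρ) * s)).const_mul
      ((s - c) * ((Real.sqrt (π / a1))⁻¹ * Real.exp (-a1 * s ^ 2) *
        (Real.sqrt (π / a2))⁻¹))).integrableOn (s := Iic t))
    refine h.congr (Eventually.of_forall fun y => ?_)
    dsimp only
    rw [bvn_fact2 hσ hρ1 hρ2 s y]
    ring
  -- the norm bound
  have hnormint : ∀ s : ℝ, ∫ y in Iic t, ‖(s - c) * bvnDensity σ ρ s (s + y)‖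
      ≤ (|s| + |c|) * ((Real.sqrt (π / a1))⁻¹ * Real.exp (-a1 * s ^ 2)) := by
    intro s
    have heq : ∀ y : ℝ, ‖(s - c) * bvnDensity σ ρ s (s + y)‖
        = (|s - c| * ((Real.sqrt (π / a1))⁻¹ * Real.exp (-a1 * s ^ 2) *
            (Real.sqrt (π / a2))⁻¹)) * Real.exp (-a2 * (y + (1 - ρ) * s) ^ 2) := by
      intro y
      rw [norm_mul, Real.norm_eq_abs, Real.norm_eq_abs,
        abs_of_nonneg (bvn_nonneg σ ρ s (s + y)), bvn_fact2 hσ hρ1 hρ2 s y]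
      ring
    simp_rw [heq]
    rw [MeasureTheory.integral_const_mul]
    have hle : ∫ y in Iic t, Real.exp (-a2 * (y + (1 - ρ) * s) ^ 2) ≤ Real.sqrt (π / a2) := by
      rw [← gauss_shift_integral ha2 ((1 - ρ) * s)]
      exact setIntegral_le_integral (gauss_shift_integrable ha2 ((1 - ρ) * s))
        (Eventually.of_forall fun y => (Real.exp_pos _).le)
    have hC1 : (0:ℝ) ≤ |s - c| * ((Real.sqrt (π / a1))⁻¹ * Real.exp (-a1 * s ^ 2) *
        (Real.sqrt (π / a2))⁻¹) := by positivity
    calc |s - c| * ((Real.sqrt (π / a1))⁻¹ * Real.exp (-a1 * s ^ 2) *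
            (Real.sqrt (π / a2))⁻¹) * ∫ y in Iic t, Real.exp (-a2 * (y + (1 - ρ) * s) ^ 2)
        ≤ |s - c| * ((Real.sqrt (π / a1))⁻¹ * Real.exp (-a1 * s ^ 2) *
            (Real.sqrt (π / a2))⁻¹) * Real.sqrt (π / a2) := by
          exact mul_le_mul_of_nonneg_left hle hC1
      _ = |s - c| * ((Real.sqrt (π / a1))⁻¹ * Real.exp (-a1 * s ^ 2)) := by
          have : (Real.sqrt (π / a2))⁻¹ * Real.sqrt (π / a2) = 1 :=
            inv_mul_cancel₀ (by positivity)
          calc |s - c| * ((Real.sqrt (π / a1))⁻¹ * Real.exp (-a1 * s ^ 2) *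
                (Real.sqrt (π / a2))⁻¹) * Real.sqrt (π / a2)
              = |s - c| * ((Real.sqrt (π / a1))⁻¹ * Real.exp (-a1 * s ^ 2)) *
                ((Real.sqrt (π / a2))⁻¹ * Real.sqrt (π / a2)) := by ring
            _ = _ := by rw [this, mul_one]
      _ ≤ (|s| + |c|) * ((Real.sqrt (π / a1))⁻¹ * Real.exp (-a1 * s ^ 2)) := by
          apply mul_le_mul_of_nonneg_right (abs_sub s c) (by positivity)
  -- integrability on the product
  have hprod : Integrable (fun p : ℝ × ℝ => (p.1 - c) * bvnDensity σ ρ p.1 (p.1 + p.2))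
      (volume.prod (volume.restrict (Iic t))) := by
    rw [integrable_prod_iff hmeas]
    constructor
    · exact Eventually.of_forall fun s => hslice s
    · have hg : Integrable (fun s : ℝ => (|s| + |c|) *
          ((Real.sqrt (π / a1))⁻¹ * Real.exp (-a1 * s ^ 2))) := by
        have hI1 : Integrable (fun s : ℝ => |s| * Real.exp (-a1 * s ^ 2)) := by
          refine (integrable_mul_exp_neg_mul_sq ha1).abs.congr
            (Eventually.of_forall fun x => ?_)
          dsimp only
          rw [abs_mul, abs_of_pos (Real.exp_pos _)]
        have hI2 := (integrable_exp_neg_mul_sq ha1).const_mul |c|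
        refine ((hI1.add hI2).const_mul (Real.sqrt (π / a1))⁻¹).congr
          (Eventually.of_forall fun x => ?_)
        simp only [Pi.add_apply]
        ring
      refine hg.mono' (hmeas.norm.integral_prod_right') ?_
      refine Eventually.of_forall fun s => ?_
      rw [Real.norm_eq_abs, abs_of_nonneg (integral_nonneg fun y => norm_nonneg _)]
      exact hnormint s
  -- Fubini
  rw [MeasureTheory.integral_integral_swap hprod]
  -- inner integral over s
  have hinner : ∀ y : ℝ, ∫ s : ℝ, (s - c) * bvnDensity σ ρ s (s + y)
      = (-(y / 2) - c) * ((Real.sqrt (π / b2))⁻¹ * Real.exp (-b2 * y ^ 2)) := by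
    intro y
    have heq : (fun s : ℝ => (s - c) * bvnDensity σ ρ s (s + y))
        = fun s : ℝ =>
          ((Real.sqrt (π / b1))⁻¹ * ((Real.sqrt (π / b2))⁻¹ * Real.exp (-b2 * y ^ 2))) *
            (s * Real.exp (-b1 * (s + y / 2) ^ 2)) -
          (c * ((Real.sqrt (π / b1))⁻¹ * ((Real.sqrt (π / b2))⁻¹ * Real.exp (-b2 * y ^ 2)))) *
            Real.exp (-b1 * (s + y / 2) ^ 2) := by
      funext s
      rw [bvn_fact1 hσ hρ1 hρ2 s y]
      ring
    rw [heq, integral_sub ((gauss_shift_moment_integrable hb1 (y / 2)).const_mul _)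
      ((gauss_shift_integrable hb1 (y / 2)).const_mul _),
      MeasureTheory.integral_const_mul, MeasureTheory.integral_const_mul,
      gauss_shift_moment hb1 (y / 2), gauss_shift_integral hb1 (y / 2)]
    have hu : (Real.sqrt (π / b1))⁻¹ * Real.sqrt (π / b1) = 1 := inv_mul_cancel₀ (by positivity)
    linear_combination (-(y / 2) - c) * ((Real.sqrt (π / b2))⁻¹ * Real.exp (-b2 * y ^ 2)) * hu
  simp_rw [hinner]
  -- outer integral over y
  have heq2 : (fun y : ℝ => (-(y / 2) - c) * ((Real.sqrt (π / b2))⁻¹ * Real.exp (-b2 * y ^ 2)))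
      = fun y : ℝ => (-(Real.sqrt (π / b2))⁻¹ / 2) * (y * Real.exp (-b2 * y ^ 2)) +
          (-c * (Real.sqrt (π / b2))⁻¹) * Real.exp (-b2 * y ^ 2) := by
    funext y; ring
  rw [heq2, integral_add (((integrable_mul_exp_neg_mul_sq hb2).integrableOn).const_mul _)
    (((integrable_exp_neg_mul_sq hb2).integrableOn).const_mul _),
    MeasureTheory.integral_const_mul, MeasureTheory.integral_const_mul,
    gauss_Iic_moment hb2 t]
  -- identify the pieces
  have hexp : ∀ x : ℝ, Real.exp (-b2 * x ^ 2) = Real.sqrt (2 * π) * stdNormalPdf (x / τ) := by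
    intro x
    unfold stdNormalPdf
    rw [← mul_div_assoc, mul_div_cancel_left₀ _ (by positivity : Real.sqrt (2 * π) ≠ 0)]
    congr 1
    rw [hb2τ, div_pow, mul_inv, div_eq_mul_inv, div_eq_mul_inv]
    ring
  have hA2 : Real.sqrt (π / b2) = Real.sqrt (2 * π) * τ := by
    rw [show π / b2 = 2 * π * τ ^ 2 by rw [hb2τ]; field_simp,
      Real.sqrt_mul (by positivity), Real.sqrt_sq hτ.le]
  have hcdf : ∫ y in Iic t, Real.exp (-b2 * y ^ 2)
      = Real.sqrt (2 * π) * (τ * stdNormalCdf (t / τ)) := by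
    simp_rw [hexp]
    rw [MeasureTheory.integral_const_mul, cdf_scale hτ t]
  rw [hcdf, hA2, hexp t, hb2τ]
  have hs2π : Real.sqrt (2 * π) ≠ 0 := by positivity
  field_simp
  ring


end BZAux

/-- for the bivariate normal model under squared error loss, the
unique Brewster–Zidek solution of `∫∫_{y ≤ t} (s - c) f(s, s+y) dy ds = 0` is
`c = (τ/2) φ(t/τ)/Φ(t/τ)` with `τ = σ√(2(1-ρ))`. -/
theorem bz_solution_normal (σ ρ t : ℝ) (hσ : 0 < σ) (hρ : ρ ∈ Set.Ioo (-1 : ℝ) 1) :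
    (∫ s : ℝ, ∫ y in Set.Iic t,
        (s - σ * Real.sqrt (2 * (1 - ρ)) / 2 *
            stdNormalPdf (t / (σ * Real.sqrt (2 * (1 - ρ)))) /
            stdNormalCdf (t / (σ * Real.sqrt (2 * (1 - ρ))))) *
          bvnDensity σ ρ s (s + y)) = 0 ∧
      ∀ c : ℝ,
        (∫ s : ℝ, ∫ y in Set.Iic t, (s - c) * bvnDensity σ ρ s (s + y)) = 0 →
          c = σ * Real.sqrt (2 * (1 - ρ)) / 2 *
              stdNormalPdf (t / (σ * Real.sqrt (2 * (1 - ρ)))) /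
              stdNormalCdf (t / (σ * Real.sqrt (2 * (1 - ρ)))) := by
  obtain ⟨hρ1, hρ2⟩ := hρ
  have hΦ := stdNormalCdf_pos (t / (σ * Real.sqrt (2 * (1 - ρ))))
  constructor
  · rw [key σ ρ t _ hσ hρ1 hρ2, div_mul_cancel₀ _ hΦ.ne', sub_self]
  · intro c hc
    rw [key σ ρ t c hσ hρ1 hρ2] at hc
    rw [eq_div_iff hΦ.ne']
    linarith
end
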